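/- Let B be a finite band such that the integral semigroup algebra ℤB has a two-sided identity. Then for every X ∈ Λ(B), the graph Γ_R(B,X) (vertices σ⁻¹(X), edges between elements with a common ≤_R upper bound) is connected. -/

import Mathlib

/-- The principal two-sided ideal `BbB = {u*b*v}` in a semigroup. -/
def prinIdeal {B : Type*} [Semigroup B] (b : B) : Set B := {z | ∃ u v : B, z = u * b * v}

section BandLemmas

variable {B : Type*} [Semigroup B]

/-- Sandwich identity in a band: `(uyv) y (uyv) = uyv`. -/
lemma band_sandwich (hband : ∀ x : B, x * x = x) (u y v : B) :
    (u * y * v) * y * (u * y * v) = u * y * v := by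
  have hyv' : y * (v * (y * v)) = y * v := by
    have h := hband (y * v); simpa [mul_assoc] using h
  have hum : (u * (y * v * y)) * (u * (y * v * y)) = u * (y * v * y) := hband _
  symm
  calc u * y * v = u * (y * v) := by rw [mul_assoc]
    _ = u * ((y * v) * (y * v)) := by rw [hband (y * v)]
    _ = (u * (y * v * y)) * v := by simp only [mul_assoc]
    _ = ((u * (y * v * y)) * (u * (y * v * y))) * v := by rw [hum]
    _ = u * (y * (v * (y * (u * (y * (v * (y * v))))))) := by simp only [mul_assoc]
    _ = u * (y * (v * (y * (u * (y * v))))) := by rw [hyv']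
    _ = (u * y * v) * y * (u * y * v) := by simp only [mul_assoc]

/-- Rectangularity-type identity: if `zaz = z` and `zbz = z` then `z(ab)z = z`. -/
lemma band_rect (hband : ∀ x : B, x * x = x) {z a b : B}
    (ha : z * a * z = z) (hb : z * b * z = z) : z * (a * b) * z = z := by
  calc z * (a * b) * z = (z * b * z) * (a * b) * (z * a * z) := by rw [hb, ha]
    _ = z * ((b * z * a) * (b * z * a)) * z := by simp only [mul_assoc]
    _ = z * (b * z * a) * z := by rw [hband (b * z * a)]
    _ = z * b * z * a * z := by simp only [mul_assoc]
    _ = z := by rw [hb, ha]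

lemma mem_prinIdeal_self (hband : ∀ x : B, x * x = x) (a : B) : a ∈ prinIdeal a :=
  ⟨a, a, by rw [hband, hband]⟩

lemma prinIdeal_trans {a c d : B} (h1 : a ∈ prinIdeal c) (h2 : c ∈ prinIdeal d) :
    a ∈ prinIdeal d := by
  obtain ⟨u, v, rfl⟩ := h1
  obtain ⟨s, t, rfl⟩ := h2
  exact ⟨u * s, t * v, by simp only [mul_assoc]⟩

lemma prinIdeal_subset {a c : B} (h : a ∈ prinIdeal c) : prinIdeal a ⊆ prinIdeal c :=
  fun _ hz => prinIdeal_trans hz h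

lemma sandwich_of_mem (hband : ∀ x : B, x * x = x) {z c : B} (h : z ∈ prinIdeal c) :
    z * c * z = z := by
  obtain ⟨u, v, rfl⟩ := h
  exact band_sandwich hband u c v

/-- In a band, the principal ideal of a product is the intersection. -/
lemma prinIdeal_mul (hband : ∀ x : B, x * x = x) (a b : B) :
    prinIdeal (a * b) = prinIdeal a ∩ prinIdeal b := by
  apply Set.Subset.antisymm
  · intro z hz
    constructor
    · exact prinIdeal_trans hz ⟨a, b, by rw [hband a]⟩
    · exact prinIdeal_trans hz ⟨a, b, by rw [mul_assoc, hband b]⟩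
  · rintro z ⟨hza, hzb⟩
    have h1 : z * a * z = z := sandwich_of_mem hband hza
    have h2 : z * b * z = z := sandwich_of_mem hband hzb
    exact ⟨z, z, (band_rect hband h1 h2).symm⟩

end BandLemmas

/-- If the integral semigroup algebra `ℤB` of a finite band `B` has a two-sided identity,
then each graph `Γ_R(B,X)` (vertices `σ⁻¹(X)`, edges between elements with a common
`≤_R` upper bound, where `a ≤_R b` iff `ba = a`) is connected. -/
theorem band_unital_implies_GammaR_connected {B : Type*} [Semigroup B] [Fintype B]
    (hband : ∀ x : B, x * x = x)
    (hunit : ∃ e : MonoidAlgebra ℤ B, ∀ f : MonoidAlgebra ℤ B, e * f = f ∧ f * e = f) :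
    ∀ x x' : B, prinIdeal x = prinIdeal x' →
      Relation.ReflTransGen
        (fun u v => prinIdeal u = prinIdeal v ∧ ∃ y : B, y * u = u ∧ y * v = v) x x' := by
  classical
  obtain ⟨e, he⟩ := hunit
  intro x x' hxx'
  set Rel : B → B → Prop :=
    fun u v => prinIdeal u = prinIdeal v ∧ ∃ y : B, y * u = u ∧ y * v = v with hRel
  -- the property of being in the component of x within the fiber of prinIdeal x
  set P : B → Prop := fun z => prinIdeal z = prinIdeal x ∧ Relation.ReflTransGen Rel x z
    with hP
  -- additive functional summing coefficients over P
  set L : MonoidAlgebra ℤ B →+ ℤ :=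
    { toFun := fun f => ∑ z : B, if P z then f.coeff z else 0
      map_zero' := by simp
      map_add' := by
        intro f g
        rw [← Finset.sum_add_distrib]
        apply Finset.sum_congr rfl
        intro z _
        by_cases h : P z
        · rw [if_pos h, if_pos h, if_pos h, MonoidAlgebra.coeff_add, Finsupp.add_apply]
        · rw [if_neg h, if_neg h, if_neg h, add_zero] } with hL
  have hLsingle : ∀ (w : B) (c : ℤ), L (MonoidAlgebra.single w c) = if P w then c else 0 := by
    intro w c
    rw [hL]
    simp only [AddMonoidHom.coe_mk, ZeroHom.coe_mk]
    rw [Finset.sum_eq_single w]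
    · simp [MonoidAlgebra.coeff_single, Finsupp.single_eq_same]
    · intro z _ hz
      simp [MonoidAlgebra.coeff_single, Finsupp.single_eq_of_ne' (Ne.symm hz)]
    · intro h
      exact absurd (Finset.mem_univ w) h
  -- key identity coming from the unit
  have key : ∀ t : B,
      (∑ b : B, if P (b * t) then e.coeff b else 0) = (if P t then 1 else 0) := by
    intro t
    have hmul : e * MonoidAlgebra.single t (1 : ℤ)
        = e.coeff.sum fun b c => MonoidAlgebra.single (b * t) c := by
      rw [MonoidAlgebra.mul_def]
      apply Finsupp.sum_congr
      intro b _
      rw [MonoidAlgebra.coeff_single, Finsupp.sum_single_index]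
      · rw [mul_one]
      · simp
    have hid := (he (MonoidAlgebra.single t (1 : ℤ))).1
    have h1 : L (e * MonoidAlgebra.single t (1 : ℤ)) = if P t then 1 else 0 := by
      rw [hid, hLsingle]
    rw [hmul] at h1
    rw [map_finsuppSum] at h1
    have h2 : (e.coeff.sum fun b c => L (MonoidAlgebra.single (b * t) c))
        = ∑ b : B, if P (b * t) then e.coeff b else 0 := by
      rw [Finsupp.sum_fintype]
      · apply Finset.sum_congr rfl
        intro b _
        rw [hLsingle]
      · intro b
        rw [hLsingle]
        simp
    rw [h2] at h1
    exact h1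
  -- P (b * x) ↔ P (b * x') for every b
  have hPiff : ∀ b : B, P (b * x) ↔ P (b * x') := by
    intro b
    have hpi : prinIdeal (b * x) = prinIdeal (b * x') := by
      rw [prinIdeal_mul hband, prinIdeal_mul hband, hxx']
    have hedge : Rel (b * x) (b * x') := by
      refine ⟨hpi, b, ?_, ?_⟩
      · rw [← mul_assoc, hband b]
      · rw [← mul_assoc, hband b]
    have hedge' : Rel (b * x') (b * x) := by
      obtain ⟨h1, y, h2, h3⟩ := hedge
      exact ⟨h1.symm, y, h3, h2⟩
    constructor
    · rintro ⟨hpe, hconn⟩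
      exact ⟨hpi ▸ hpe, hconn.tail hedge⟩
    · rintro ⟨hpe, hconn⟩
      exact ⟨hpi.symm ▸ hpe, hconn.tail hedge'⟩
  have heq : (∑ b : B, if P (b * x) then e.coeff b else 0)
      = ∑ b : B, if P (b * x') then e.coeff b else 0 := by
    apply Finset.sum_congr rfl
    intro b _
    by_cases h : P (b * x)
    · rw [if_pos h, if_pos ((hPiff b).mp h)]
    · rw [if_neg h, if_neg (fun h' => h ((hPiff b).mpr h'))]
  have hPx : P x := ⟨rfl, Relation.ReflTransGen.refl⟩
  have h1 := key x
  have h2 := key x'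
  rw [heq] at h1
  rw [h2] at h1
  rw [if_pos hPx] at h1
  by_cases hPx' : P x'
  · exact hPx'.2
  · rw [if_neg hPx'] at h1
    exact absurd h1.symm one_ne_zero
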